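/- Let (X,τ) be a topological space, let A be a unital subalgebra of the Banach space of bounded continuous real-valued functions on X with the supremum norm, and let A* denote the continuous dual of A. Suppose φ ∈ A* is a character, i.e. φ ≠ 0 and φ(fg) = φ(f)·φ(g) for all f, g ∈ A. Then: φ(f) ≥ 0 for every f ∈ A with f ≥ 0 pointwise; φ(1) = 1; ‖φ‖_{A*} = 1; and φ is an extreme point of the convex set Σ := { ψ ∈ A* : ‖ψ‖_{A*} ≤ 1, ψ(1) = 1, and ψ(f) ≥ 0 for every f ∈ A with f ≥ 0 pointwise }. -/

import Mathlib

set_option synthInstance.maxHeartbeats 1000000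
set_option maxHeartbeats 1000000

open BoundedContinuousFunction

/-- The topological dual of a seminormed space `E` (as in the older Mathlib; removed upstream). -/
abbrev NormedSpace.Dual (𝕜 : Type*) [NontriviallyNormedField 𝕜] (E : Type*) [SeminormedAddCommGroup E]
    [NormedSpace 𝕜 E] : Type _ := E →L[𝕜] 𝕜

/-- The set `Σ` of "states": continuous linear functionals `ψ` on `A` with `‖ψ‖ ≤ 1`,
`ψ 1 = 1`, and `ψ f ≥ 0` whenever `f` is pointwise nonnegative. -/
def stateSet {X : Type*} [TopologicalSpace X]
    (A : Subalgebra ℝ (BoundedContinuousFunction X ℝ)) :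
    Set (NormedSpace.Dual ℝ A) :=
  {ψ | ‖ψ‖ ≤ 1 ∧ ψ 1 = 1 ∧
    ∀ f : A, (∀ x, 0 ≤ (f : BoundedContinuousFunction X ℝ) x) → 0 ≤ ψ f}

set_option synthInstance.maxHeartbeats 4000000
set_option maxHeartbeats 16000000

/-- Expansion of a square in a commutative `ℝ`-algebra. -/
lemma stmt5_alg_expand {R : Type*} [CommRing R] [Algebra ℝ R] (h : R) (t : ℝ) :
    (h + t • 1) * (h + t • 1) = h * h + (2 * t) • h + (t * t) • (1 : R) := by
  rw [mul_add, add_mul, add_mul, mul_smul_comm, mul_one, smul_mul_assoc, one_mul,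
    smul_mul_assoc, one_mul, smul_smul, two_mul, add_smul]
  abel

theorem stmt5 {X : Type*} [TopologicalSpace X]
    (A : Subalgebra ℝ (BoundedContinuousFunction X ℝ))
    (φ : NormedSpace.Dual ℝ A)
    (hφ0 : φ ≠ 0)
    (hφmul : ∀ f g : A, φ (f * g) = φ f * φ g) :
    (∀ f : A, (∀ x, 0 ≤ (f : BoundedContinuousFunction X ℝ) x) → 0 ≤ φ f) ∧
    φ 1 = 1 ∧
    ‖φ‖ = 1 ∧
    φ ∈ stateSet A ∧
    ∀ ψ₁ ∈ stateSet A, ∀ ψ₂ ∈ stateSet A,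
      φ = (1 / 2 : ℝ) • ψ₁ + (1 / 2 : ℝ) • ψ₂ → ψ₁ = ψ₂ := by
  -- φ 1 = 1
  have h1 : φ 1 = 1 := by
    obtain ⟨f, hf⟩ : ∃ f : A, φ f ≠ 0 := by
      by_contra h
      push_neg at h
      exact hφ0 (by ext f; simpa using h f)
    have h := hφmul f 1
    rw [mul_one] at h
    have : φ f * 1 = φ f * φ 1 := by rw [mul_one]; exact h
    exact (mul_left_cancel₀ hf this).symm
  -- X nonempty
  have hne : Nonempty X := by
    by_contra h
    have h0 : (1 : A) = 0 := by
      apply Subtype.ext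
      ext x
      exact absurd ⟨x⟩ h
    rw [h0, map_zero] at h1
    exact one_ne_zero h1.symm
  -- powers
  have hpow : ∀ (f : A) (n : ℕ), φ (f ^ n) = (φ f) ^ n := by
    intro f n
    induction n with
    | zero => simpa using h1
    | succ n ih => rw [pow_succ, hφmul, ih, pow_succ]
  have hbound1 : ‖(1 : A)‖ = 1 := by
    show ‖(1 : BoundedContinuousFunction X ℝ)‖ = 1
    exact norm_one
  -- |φ f| ≤ ‖f‖
  have hbound : ∀ f : A, |φ f| ≤ ‖f‖ := by
    intro f
    rcases eq_or_ne f 0 with rfl | hf0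
    · rw [map_zero, abs_zero]; exact norm_nonneg (0 : A)
    by_contra hcon
    push_neg at hcon
    have hfpos : 0 < ‖f‖ := by
      show 0 < ‖(f : BoundedContinuousFunction X ℝ)‖
      exact norm_pos_iff.mpr fun h => hf0 (Subtype.ext h)
    have hr1 : 1 < |φ f| / ‖f‖ := (one_lt_div hfpos).mpr hcon
    obtain ⟨n, hn⟩ := pow_unbounded_of_one_lt ‖φ‖ hr1
    have hle : |φ (f ^ n)| ≤ ‖φ‖ * ‖f ^ n‖ := by
      rw [← Real.norm_eq_abs]
      exact φ.le_opNorm _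
    rw [hpow, abs_pow] at hle
    have hfn : ‖f ^ n‖ ≤ ‖f‖ ^ n := by
      rcases Nat.eq_zero_or_pos n with rfl | hn0
      · simpa using hbound1.le
      · exact norm_pow_le' f hn0
    have : (|φ f| / ‖f‖) ^ n ≤ ‖φ‖ := by
      rw [div_pow, div_le_iff₀ (by positivity)]
      calc |φ f| ^ n ≤ ‖φ‖ * ‖f ^ n‖ := hle
        _ ≤ ‖φ‖ * ‖f‖ ^ n := mul_le_mul_of_nonneg_left hfn (norm_nonneg φ)
    linarith
  -- ‖φ‖ = 1
  have hnorm1 : ‖φ‖ = 1 := by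
    apply le_antisymm
    · refine φ.opNorm_le_bound zero_le_one fun f => ?_
      rw [Real.norm_eq_abs, one_mul]
      exact hbound f
    · have h := φ.unit_le_opNorm 1 (le_of_eq hbound1)
      rw [h1, Real.norm_eq_abs, abs_one] at h
      exact h
  -- positivity
  have hpos : ∀ f : A, (∀ x, 0 ≤ (f : BoundedContinuousFunction X ℝ) x) → 0 ≤ φ f := by
    intro f hf
    have hub : ∀ x, (f : BoundedContinuousFunction X ℝ) x ≤ ‖f‖ := fun x =>
      (le_abs_self _).trans ((f : BoundedContinuousFunction X ℝ).norm_coe_le_norm x)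
    have hsub : ‖f - ‖f‖ • (1 : A)‖ ≤ ‖f‖ := by
      rw [show ‖f - ‖f‖ • (1 : A)‖
        = ‖((f - ‖f‖ • (1 : A) : A) : BoundedContinuousFunction X ℝ)‖ from rfl]
      refine (BoundedContinuousFunction.norm_le (show (0:ℝ) ≤ ‖f‖ from norm_nonneg f)).mpr fun x => ?_
      have hx : ((f - ‖f‖ • (1 : A) : A) : BoundedContinuousFunction X ℝ) x
          = (f : BoundedContinuousFunction X ℝ) x - ‖f‖ := by push_cast; simp
      rw [hx, Real.norm_eq_abs, abs_le]
      exact ⟨by linarith [hf x], sub_le_iff_le_add.mpr ((hub x).trans (le_add_of_nonneg_right ((hf x).trans (hub x))))⟩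
    have hφsub : φ (f - ‖f‖ • 1) = φ f - ‖f‖ := by
      rw [φ.map_sub, φ.map_smul, h1, smul_eq_mul, mul_one]
    have h := (hbound _).trans hsub
    rw [hφsub, abs_le] at h
    linarith [h.1]
  have hstate : φ ∈ stateSet A := ⟨le_of_eq hnorm1, h1, hpos⟩
  refine ⟨hpos, h1, hnorm1, hstate, ?_⟩
  -- extreme point
  intro ψ₁ hψ₁ ψ₂ hψ₂ heq
  -- squares are nonneg pointwise
  have hsq : ∀ g : A, ∀ x, 0 ≤ ((g * g : A) : BoundedContinuousFunction X ℝ) x := by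
    intro g x
    have hgx : ((g * g : A) : BoundedContinuousFunction X ℝ) x
        = (g : BoundedContinuousFunction X ℝ) x * (g : BoundedContinuousFunction X ℝ) x := by
      push_cast; simp
    rw [hgx]
    exact mul_self_nonneg _
  -- key: a state vanishing on h*h vanishes on h
  have key : ∀ ψ ∈ stateSet A, ∀ h : A, ψ (h * h) = 0 → ψ h = 0 := by
    intro ψ hψ h hh
    obtain ⟨-, hψ1, hψpos⟩ := hψ
    have expand : ∀ t : ℝ, ψ ((h + t • 1) * (h + t • 1))
        = ψ (h * h) + 2 * t * ψ h + t * t := by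
      intro t
      rw [stmt5_alg_expand h t, ψ.map_add, ψ.map_add, ψ.map_smul, ψ.map_smul, hψ1,
        smul_eq_mul, smul_eq_mul]
      ring
    have hkey := hψpos _ (hsq (h + (-ψ h) • 1))
    rw [expand, hh] at hkey
    nlinarith
  ext f
  set h : A := f - φ f • 1 with hdef
  have hφh : φ (h * h) = 0 := by
    rw [hφmul]
    have hz : φ h = 0 := by
      rw [hdef, φ.map_sub, φ.map_smul, h1, smul_eq_mul, mul_one, sub_self]
    rw [hz, mul_zero]
  have hsum : (1 / 2 : ℝ) * ψ₁ (h * h) + (1 / 2 : ℝ) * ψ₂ (h * h) = 0 := by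
    have hc := congrFun (congrArg DFunLike.coe heq) (h * h)
    simp only [ContinuousLinearMap.add_apply, ContinuousLinearMap.coe_smul',
      Pi.add_apply, Pi.smul_apply, smul_eq_mul] at hc
    rw [hφh] at hc
    linarith [hc.symm]
  have p1 := hψ₁.2.2 _ (hsq h)
  have p2 := hψ₂.2.2 _ (hsq h)
  have z1 : ψ₁ h = 0 := key ψ₁ hψ₁ h (by linarith)
  have z2 : ψ₂ h = 0 := key ψ₂ hψ₂ h (by linarith)
  have e1 : ψ₁ f = φ f := by
    have := z1
    rw [hdef, ψ₁.map_sub, ψ₁.map_smul, hψ₁.2.1, smul_eq_mul, mul_one, sub_eq_zero] at this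
    exact this
  have e2 : ψ₂ f = φ f := by
    have := z2
    rw [hdef, ψ₂.map_sub, ψ₂.map_smul, hψ₂.2.1, smul_eq_mul, mul_one, sub_eq_zero] at this
    exact this
  rw [e1, e2]
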